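/- (Concentration of the componentwise median of i.i.d. random vectors.) There is an absolute constant c > 0 such that the following holds. Let g₁, …, g_t be i.i.d. random vectors in ℝ^k, and let B ≥ 0 satisfy Pr{ ‖g₁‖ ≤ B } ≥ 4/5. Then the componentwise median ḡ = median(g₁, …, g_t) satisfies Pr{ ‖ḡ‖ > 2B } ≤ exp(−c t). -/

import Mathlib

open MeasureTheory

/-- `m` is a median of the `t` real numbers `v 0, …, v (t-1)`:
at least `t/2` of them are `≥ m` and at least `t/2` of them are `≤ m`. -/
def IsMedian {t : ℕ} (v : Fin t → ℝ) (m : ℝ) : Prop :=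
  (t : ℝ) / 2 ≤ (Finset.univ.filter fun j => m ≤ v j).card ∧
  (t : ℝ) / 2 ≤ (Finset.univ.filter fun j => v j ≤ m).card

lemma euc_normsq {k : ℕ} (x : EuclideanSpace ℝ (Fin k)) : ‖x‖^2 = ∑ r, x r ^ 2 := by
  rw [EuclideanSpace.norm_eq, Real.sq_sqrt (by positivity)]
  simp [sq_abs]

/-- If the componentwise median of `v 0, …, v (t-1)` has norm `> 2B`, then more than
`t/3` of the vectors have norm `> B`. -/
lemma geom_aux {k t : ℕ} (v : Fin t → EuclideanSpace ℝ (Fin k)) (m : EuclideanSpace ℝ (Fin k))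
    (hmed : ∀ r, IsMedian (fun j => v j r) (m r)) (B : ℝ) (hB : 0 ≤ B) (hM : 2*B < ‖m‖) :
    (t:ℝ)/3 ≤ ((Finset.univ.filter fun j => B < ‖v j‖).card : ℝ) := by
  classical
  set S : Finset (Fin t) := Finset.univ.filter (fun j => ‖v j‖ ≤ B) with hS
  have hsle : S.card ≤ t := by
    have := Finset.card_le_card (Finset.subset_univ S); simpa using this
  have hcards : (Finset.univ.filter fun j => B < ‖v j‖).card = t - S.card := by
    have hceq : (Finset.univ.filter fun j => B < ‖v j‖) = Finset.univ \ S := by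
      rw [hS, ← Finset.filter_not]
      exact Finset.filter_congr (fun j _ => by simp [not_le])
    rw [hceq, Finset.card_sdiff_of_subset (Finset.subset_univ S)]
    simp
  have key : ∀ r : Fin k, ((S.card : ℝ) - t/2) * (m r)^2 ≤ ∑ j ∈ S, (v j r)^2 := by
    intro r
    have main : ∀ A : Finset (Fin t), (t:ℝ)/2 ≤ A.card →
        (∀ j ∈ A, (m r)^2 ≤ (v j r)^2) →
        ((S.card : ℝ) - t/2) * (m r)^2 ≤ ∑ j ∈ S, (v j r)^2 := by
      intro A hAcard hgs
      have hinter : ((S.card : ℝ) - t/2) ≤ ((A ∩ S).card : ℝ) := by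
        have h1 : ((A : Finset (Fin t)).card : ℝ) + S.card = ((A ∪ S).card : ℝ) + (A ∩ S).card := by
          exact_mod_cast (Finset.card_union_add_card_inter A S).symm
        have h2 : ((A ∪ S).card : ℝ) ≤ t := by
          have := Finset.card_le_card (Finset.subset_univ (A ∪ S))
          simp only [Finset.card_univ, Fintype.card_fin] at this
          exact_mod_cast this
        linarith
      calc ((S.card : ℝ) - t/2) * (m r)^2 ≤ ((A ∩ S).card : ℝ) * (m r)^2 := by
            nlinarith [sq_nonneg (m r)]
        _ ≤ ∑ j ∈ A ∩ S, (v j r)^2 := by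
            have h3 : ∑ _j ∈ A ∩ S, (m r)^2 = ((A ∩ S).card : ℝ) * (m r)^2 := by
              rw [Finset.sum_const, nsmul_eq_mul]
            rw [← h3]
            exact Finset.sum_le_sum fun j hj => hgs j (Finset.mem_inter.mp hj).1
        _ ≤ ∑ j ∈ S, (v j r)^2 := by
            refine Finset.sum_le_sum_of_subset_of_nonneg Finset.inter_subset_right ?_
            intro j _ _; positivity
    rcases le_or_gt 0 (m r) with hmr | hmr
    · refine main (Finset.univ.filter (fun j => m r ≤ v j r)) ((hmed r).1) ?_
      intro j hj
      have hj' : m r ≤ v j r := by simpa using (Finset.mem_filter.mp hj).2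
      nlinarith
    · refine main (Finset.univ.filter (fun j => v j r ≤ m r)) ((hmed r).2) ?_
      intro j hj
      have hj' : v j r ≤ m r := by simpa using (Finset.mem_filter.mp hj).2
      nlinarith
  have hsum : ((S.card : ℝ) - t/2) * ‖m‖^2 ≤ (S.card : ℝ) * B^2 := by
    have h1 : ((S.card : ℝ) - t/2) * ‖m‖^2 ≤ ∑ r, ∑ j ∈ S, (v j r)^2 := by
      rw [euc_normsq, Finset.mul_sum]
      exact Finset.sum_le_sum fun r _ => key r
    have h2 : ∑ r, ∑ j ∈ S, (v j r)^2 ≤ (S.card : ℝ) * B^2 := by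
      rw [Finset.sum_comm]
      calc ∑ j ∈ S, ∑ r, (v j r)^2 ≤ ∑ _j ∈ S, B^2 := by
            refine Finset.sum_le_sum fun j hj => ?_
            have hjB : ‖v j‖ ≤ B := by simpa [hS] using (Finset.mem_filter.mp hj).2
            rw [← euc_normsq]
            nlinarith [norm_nonneg (v j)]
        _ = (S.card : ℝ) * B^2 := by rw [Finset.sum_const, nsmul_eq_mul]
    linarith
  have hfinal : 3 * (S.card : ℝ) ≤ 2 * t := by
    by_contra hcon
    push_neg at hcon
    have hs0 : (0:ℝ) < S.card := by
      have ht0 : (0:ℝ) ≤ t := by positivity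
      linarith
    have hM0 : 0 < ‖m‖ := lt_of_le_of_lt (by linarith) hM
    have hM2 : (0:ℝ) < ‖m‖^2 := by positivity
    have hBM : B^2 ≤ ‖m‖^2/4 := by nlinarith
    nlinarith [mul_lt_mul_of_pos_right
        (show (S.card:ℝ)/4 < (S.card:ℝ) - t/2 by linarith) hM2,
      mul_le_mul_of_nonneg_left hBM (le_of_lt hs0)]
  rw [hcards]
  push_cast [Nat.cast_sub hsle] at *
  linarith

lemma exp_half_lt : Real.exp (1/2) < 11/6 := by
  have h1 : Real.exp (1/2) * Real.exp (1/2) = Real.exp 1 := by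
    rw [← Real.exp_add]; norm_num
  have h2 : Real.exp 1 < 2.7182818286 := Real.exp_one_lt_d9
  nlinarith [Real.exp_pos (1/2)]

lemma exp_ind_eq {Θ : Type} (s : Set Θ) :
    (fun θ => Real.exp ((1/2) * (s.indicator (fun _ => (1:ℝ)) θ)))
      = fun θ => 1 + (Real.exp (1/2) - 1) * s.indicator (fun _ => (1:ℝ)) θ := by
  funext θ
  by_cases h : θ ∈ s <;>
    simp [Set.indicator_of_mem, Set.indicator_of_notMem, h]

/-- mgf bound at rate `1/2` for an indicator with success probability at most `1/5`. -/
lemma mgf_ind_bound (Θ : Type) (mΘ : MeasurableSpace Θ) (μ : Measure Θ) [IsProbabilityMeasure μ]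
    (s : Set Θ) (hs : MeasurableSet s) (hp : μ s ≤ ENNReal.ofReal (1/5)) :
    ProbabilityTheory.mgf (s.indicator fun _ => (1:ℝ)) μ (1/2)
      ≤ Real.exp ((Real.exp (1/2) - 1)/5) := by
  have hpR : (μ s).toReal ≤ 1/5 := by
    refine le_trans (ENNReal.toReal_mono (by simp) hp) ?_
    rw [ENNReal.toReal_ofReal (by norm_num)]
  rw [ProbabilityTheory.mgf, exp_ind_eq]
  have hind : Integrable (s.indicator fun _ => (1:ℝ)) μ :=
    (integrable_const (1:ℝ)).indicator hs
  rw [integral_add (integrable_const 1) (hind.const_mul _)]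
  rw [integral_const_mul, integral_indicator_const _ hs]
  simp only [integral_const, measure_univ, ENNReal.toReal_one, smul_eq_mul, one_mul,
    probReal_univ, mul_one, measureReal_def]
  have hexp1 : 1 ≤ Real.exp (1/2) := Real.one_le_exp (by norm_num)
  have h4 := Real.add_one_le_exp ((Real.exp (1/2) - 1)/5)
  nlinarith [ENNReal.toReal_nonneg (a := μ s)]

/-- **Concentration of the componentwise median of i.i.d. random vectors.**
There is an absolute constant `c > 0` such that for i.i.d. random vectors
`g 1, …, g t` in `ℝ^k` with `Pr{‖g j‖ ≤ B} ≥ 4/5`, any componentwise median `ḡ`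
satisfies `Pr{‖ḡ‖ > 2B} ≤ exp(−c t)`. -/
theorem median_concentration :
    ∃ c : ℝ, 0 < c ∧
      ∀ (Θ : Type) (mΘ : MeasurableSpace Θ) (μ : Measure Θ),
        IsProbabilityMeasure μ →
      ∀ (k t : ℕ) (g : Fin t → Θ → EuclideanSpace ℝ (Fin k)),
        (∀ j, Measurable (g j)) →
        ProbabilityTheory.iIndepFun g μ →
        (∀ j j' : Fin t, Measure.map (g j) μ = Measure.map (g j') μ) →
      ∀ B : ℝ, 0 ≤ B →
        (∀ j : Fin t, ENNReal.ofReal (4/5) ≤ μ {θ | ‖g j θ‖ ≤ B}) →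
      ∀ gbar : Θ → EuclideanSpace ℝ (Fin k),
        (∀ θ (r : Fin k), IsMedian (fun j => g j θ r) (gbar θ r)) →
        μ {θ | 2 * B < ‖gbar θ‖} ≤ ENNReal.ofReal (Real.exp (-(c * t))) := by
  classical
  refine ⟨1/6 - (Real.exp (1/2) - 1)/5, by nlinarith [exp_half_lt], ?_⟩
  intro Θ mΘ μ hprob k t g hgmeas hindep _hident B hB hPB gbar hmedian
  set c : ℝ := 1/6 - (Real.exp (1/2) - 1)/5 with hc
  -- indicator random variables of the "bad" events
  set φ : EuclideanSpace ℝ (Fin k) → ℝ := ({x | B < ‖x‖}).indicator (fun _ => (1:ℝ)) with hφdef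
  have hφmeas : Measurable φ :=
    Measurable.indicator measurable_const (measurableSet_lt measurable_const measurable_norm)
  set Y : Fin t → Θ → ℝ := fun j => φ ∘ g j with hYdef
  have hYmeas : ∀ j, Measurable (Y j) := fun j => hφmeas.comp (hgmeas j)
  have hYindep : ProbabilityTheory.iIndepFun Y μ :=
    hindep.comp (fun _ => φ) (fun _ => hφmeas)
  set Bad : Fin t → Set Θ := fun j => {θ | B < ‖g j θ‖} with hBaddef
  have hBadMeas : ∀ j, MeasurableSet (Bad j) := fun j =>
    measurableSet_lt measurable_const (hgmeas j).norm
  have hYind : ∀ j, Y j = (Bad j).indicator (fun _ => (1:ℝ)) := by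
    intro j; funext θ
    by_cases h : B < ‖g j θ‖ <;>
      simp [hYdef, hφdef, hBaddef, Set.indicator, h]
  -- probability of the bad event is at most 1/5
  have hBadProb : ∀ j, μ (Bad j) ≤ ENNReal.ofReal (1/5) := by
    intro j
    have hGood : MeasurableSet {θ | ‖g j θ‖ ≤ B} :=
      measurableSet_le (hgmeas j).norm measurable_const
    have hcompl : Bad j = {θ | ‖g j θ‖ ≤ B}ᶜ := by
      ext θ; simp [hBaddef, not_le]
    rw [hcompl, measure_compl hGood (measure_ne_top μ _), measure_univ]
    have h1 : (1:ENNReal) - μ {θ | ‖g j θ‖ ≤ B} ≤ 1 - ENNReal.ofReal (4/5) :=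
      tsub_le_tsub_left (hPB j) 1
    refine le_trans h1 (le_of_eq ?_)
    rw [← ENNReal.ofReal_one, ← ENNReal.ofReal_sub _ (by norm_num)]
    norm_num
  -- mgf bounds
  have hmgfj : ∀ j, ProbabilityTheory.mgf (Y j) μ (1/2)
      ≤ Real.exp ((Real.exp (1/2) - 1)/5) := by
    intro j
    rw [hYind j]
    exact mgf_ind_bound Θ mΘ μ (Bad j) (hBadMeas j) (hBadProb j)
  -- integrability
  have hYint : ∀ j, Integrable (fun θ => Real.exp ((1/2) * Y j θ)) μ := by
    intro j
    have : (fun θ => Real.exp ((1/2) * Y j θ))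
        = fun θ => 1 + (Real.exp (1/2) - 1) * (Bad j).indicator (fun _ => (1:ℝ)) θ := by
      rw [hYind j]; exact exp_ind_eq (Bad j)
    rw [this]
    exact (integrable_const 1).add (((integrable_const (1:ℝ)).indicator (hBadMeas j)).const_mul _)
  have hsumint : Integrable (fun ω => Real.exp ((1/2) * (∑ j, Y j) ω)) μ :=
    hYindep.integrable_exp_mul_sum hYmeas (fun j _ => hYint j)
  -- Chernoff bound
  have hcher := ProbabilityTheory.measure_ge_le_exp_mul_mgf (μ := μ) (X := ∑ j, Y j)
    ((t:ℝ)/3) (by norm_num : (0:ℝ) ≤ 1/2) hsumint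
  have hmgfsum : ProbabilityTheory.mgf (∑ j, Y j) μ (1/2)
      ≤ Real.exp ((t:ℝ) * ((Real.exp (1/2) - 1)/5)) := by
    rw [hYindep.mgf_sum hYmeas Finset.univ]
    calc ∏ j, ProbabilityTheory.mgf (Y j) μ (1/2)
        ≤ ∏ _j : Fin t, Real.exp ((Real.exp (1/2) - 1)/5) :=
          Finset.prod_le_prod (fun j _ => ProbabilityTheory.mgf_nonneg) (fun j _ => hmgfj j)
      _ = Real.exp ((Real.exp (1/2) - 1)/5) ^ t := by
          rw [Finset.prod_const, Finset.card_univ, Fintype.card_fin]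
      _ = Real.exp ((t:ℝ) * ((Real.exp (1/2) - 1)/5)) := (Real.exp_nat_mul _ t).symm
  -- event inclusion
  have hsub : {θ | 2 * B < ‖gbar θ‖} ⊆ {ω | (t:ℝ)/3 ≤ (∑ j, Y j) ω} := by
    intro θ hθ
    have hgeo := geom_aux (fun j => g j θ) (gbar θ) (fun r => hmedian θ r) B hB hθ
    have hsumY : (∑ j, Y j) θ = ((Finset.univ.filter fun j => B < ‖g j θ‖).card : ℝ) := by
      rw [Finset.sum_apply]
      have : ∀ j, Y j θ = if B < ‖g j θ‖ then (1:ℝ) else 0 := by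
        intro j
        by_cases h : B < ‖g j θ‖ <;> simp [hYdef, hφdef, Set.indicator, h]
      simp only [this]
      rw [Finset.sum_boole]
    simp only [Set.mem_setOf_eq, hsumY]
    exact hgeo
  -- conclude
  calc μ {θ | 2 * B < ‖gbar θ‖} ≤ μ {ω | (t:ℝ)/3 ≤ (∑ j, Y j) ω} := measure_mono hsub
    _ = ENNReal.ofReal ((μ {ω | (t:ℝ)/3 ≤ (∑ j, Y j) ω}).toReal) :=
        (ENNReal.ofReal_toReal (measure_ne_top μ _)).symm
    _ ≤ ENNReal.ofReal (Real.exp (-(c * t))) := by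
        refine ENNReal.ofReal_le_ofReal (le_trans hcher ?_)
        have hkey : Real.exp (-(1/2) * ((t:ℝ)/3)) * Real.exp ((t:ℝ) * ((Real.exp (1/2) - 1)/5))
            = Real.exp (-(c * t)) := by
          rw [← Real.exp_add]; congr 1; rw [hc]; ring
        calc Real.exp (-(1/2) * ((t:ℝ)/3)) * ProbabilityTheory.mgf (∑ j, Y j) μ (1/2)
            ≤ Real.exp (-(1/2) * ((t:ℝ)/3)) * Real.exp ((t:ℝ) * ((Real.exp (1/2) - 1)/5)) :=
              mul_le_mul_of_nonneg_left hmgfsum (Real.exp_nonneg _)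
          _ = Real.exp (-(c * t)) := hkey
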